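/- arXiv:1803.05932 — 3 statements merged into one kernel-verified Lean document; each statement's English description precedes it below -/
import Mathlib

section
/- Let f : ℝ^m → ℝ^m satisfy the dissipativity condition ⟨x, f(x)⟩ ≤ -α̃‖x‖² + β̃ with α̃, β̃ > 0, and the linear growth bound ‖f(x)‖² ≤ 2(‖f(0)‖² + K²‖x‖²). Then for any α ∈ (0, α̃) there exist β > β̃ and h₀ > 0 such that for all 0 < h < h₀ and all x ∈ ℝ^m: ‖x + f(x)h‖² ≤ (1 - 2αh)‖x‖² + 2βh. -/
open Real

theorem euler_one_step_dissipativity (m : ℕ) (K alpha' beta' : ℝ)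
    (hK : 0 < K) (halpha' : 0 < alpha') (hbeta' : 0 < beta')
    (f : EuclideanSpace ℝ (Fin m) → EuclideanSpace ℝ (Fin m))
    (hdiss : ∀ x, (inner ℝ x (f x) : ℝ) ≤ -alpha' * ‖x‖ ^ 2 + beta')
    (hgrowth : ∀ x, ‖f x‖ ^ 2 ≤ 2 * (‖f 0‖ ^ 2 + K ^ 2 * ‖x‖ ^ 2))
    (alpha : ℝ) (ha : 0 < alpha) (ha' : alpha < alpha') :
    ∃ beta > beta', ∃ h₀ > 0, ∀ h : ℝ, 0 < h → h < h₀ →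
      ∀ x, ‖x + h • f x‖ ^ 2 ≤ (1 - 2 * alpha * h) * ‖x‖ ^ 2 + 2 * beta * h := by
  refine ⟨beta' + ‖f 0‖ ^ 2 + 1, by nlinarith [sq_nonneg ‖f 0‖], min ((alpha' - alpha) / K ^ 2) 1,
    lt_min (div_pos (by linarith) (by positivity)) one_pos, fun h hh hh' x => ?_⟩
  have hh1 : h < 1 := lt_of_lt_of_le hh' (min_le_right _ _)
  have hh2 : h * K ^ 2 ≤ alpha' - alpha := by
    have := lt_of_lt_of_le hh' (min_le_left _ _)
    rw [lt_div_iff₀ (by positivity)] at this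
    linarith
  have hexp : ‖x + h • f x‖ ^ 2
      = ‖x‖ ^ 2 + 2 * (h * inner ℝ x (f x)) + h ^ 2 * ‖f x‖ ^ 2 := by
    rw [norm_add_sq_real, real_inner_smul_right, norm_smul, Real.norm_eq_abs,
      abs_of_pos hh]
    ring
  have h1 := hdiss x
  have h2 := hgrowth x
  have hf0 : (0:ℝ) ≤ ‖f 0‖ ^ 2 := by positivity
  nlinarith [mul_le_mul_of_nonneg_left h2 (sq_nonneg h),
    mul_le_mul_of_nonneg_left h1 hh.le,
    mul_le_mul_of_nonneg_right hh2 (mul_nonneg hh.le (sq_nonneg ‖x‖)),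
    mul_le_mul_of_nonneg_right hh1.le (mul_nonneg hh.le hf0)]
end

section
/- Let f satisfy the one-sided Lipschitz condition ⟨x - y, f(x) - f(y)⟩ ≤ λ‖x - y‖² and the global Lipschitz condition ‖f(x) - f(y)‖ ≤ K‖x - y‖. For S > λ/2, consider the one-step odd-time update e ↦ (1 - 2Sh)e + (f(x) - f(y))h where e = x - y. Then ‖(1-2Sh)(x-y) + (f(x)-f(y))h‖² ≤ ((1-2Sh)² + 2λh(1-2Sh) + K²h²)‖x - y‖², and there exists h₀ > 0 such that for all 0 < h < h₀ this is at most 2‖x - y‖². -/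
open Real

theorem odd_step_difference_bound (m : ℕ) (lam K S : ℝ)
    (hlam : 0 < lam) (hK : 0 < K) (hS : S > lam / 2)
    (f : EuclideanSpace ℝ (Fin m) → EuclideanSpace ℝ (Fin m))
    (hosl : ∀ x y, (inner ℝ (x - y) (f x - f y) : ℝ) ≤ lam * ‖x - y‖ ^ 2)
    (hlip : ∀ x y, ‖f x - f y‖ ≤ K * ‖x - y‖) :
    (∀ h : ℝ, 0 < h → 2 * S * h < 1 → ∀ x y,
      ‖(1 - 2 * S * h) • (x - y) + h • (f x - f y)‖ ^ 2 ≤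
        ((1 - 2 * S * h) ^ 2 + 2 * lam * h * (1 - 2 * S * h) + K ^ 2 * h ^ 2)
          * ‖x - y‖ ^ 2)
    ∧ ∃ h₀ > 0, ∀ h : ℝ, 0 < h → h < h₀ → 2 * S * h < 1 → ∀ x y,
      ‖(1 - 2 * S * h) • (x - y) + h • (f x - f y)‖ ^ 2 ≤ 2 * ‖x - y‖ ^ 2 := by
  have key : ∀ h : ℝ, 0 < h → 2 * S * h < 1 → ∀ x y,
      ‖(1 - 2 * S * h) • (x - y) + h • (f x - f y)‖ ^ 2 ≤
        ((1 - 2 * S * h) ^ 2 + 2 * lam * h * (1 - 2 * S * h) + K ^ 2 * h ^ 2)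
          * ‖x - y‖ ^ 2 := by
    intro h hh hSh x y
    set e := x - y
    set d := f x - f y
    have ha : (0:ℝ) < 1 - 2 * S * h := by linarith
    have hexp : ‖(1 - 2 * S * h) • e + h • d‖ ^ 2 =
        (1 - 2 * S * h) ^ 2 * ‖e‖ ^ 2 +
          2 * ((1 - 2 * S * h) * h) * (inner ℝ e d : ℝ) + h ^ 2 * ‖d‖ ^ 2 := by
      rw [norm_add_sq_real, norm_smul, norm_smul, real_inner_smul_left,
        real_inner_smul_right]
      simp [abs_of_pos ha, abs_of_pos hh]
      ring
    rw [hexp]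
    have h1 : (inner ℝ e d : ℝ) ≤ lam * ‖e‖ ^ 2 := hosl x y
    have h2 : ‖d‖ ≤ K * ‖e‖ := hlip x y
    have h3 : ‖d‖ ^ 2 ≤ K ^ 2 * ‖e‖ ^ 2 := by
      nlinarith [norm_nonneg d, norm_nonneg e]
    nlinarith [mul_pos ha hh, sq_nonneg h]
  refine ⟨key, min 1 (1 / (2 * lam + K ^ 2)), ?_, ?_⟩
  · have : 0 < 2 * lam + K ^ 2 := by positivity
    exact lt_min one_pos (by positivity)
  · intro h hh hh0 hSh x y
    have hbd := key h hh hSh x y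
    refine hbd.trans ?_
    have hne : ‖x - y‖ ^ 2 ≥ 0 := sq_nonneg _
    have ha : (0:ℝ) < 1 - 2 * S * h := by linarith
    have h1 : h < 1 := lt_of_lt_of_le hh0 (min_le_left _ _)
    have hden : 0 < 2 * lam + K ^ 2 := by positivity
    have h2 : h < 1 / (2 * lam + K ^ 2) := lt_of_lt_of_le hh0 (min_le_right _ _)
    have h3 : (2 * lam + K ^ 2) * h < 1 := by
      rw [lt_div_iff₀ hden] at h2; linarith [h2]
    have hcoef : (1 - 2 * S * h) ^ 2 + 2 * lam * h * (1 - 2 * S * h) + K ^ 2 * h ^ 2 ≤ 2 := by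
      have hSpos : 0 < S := by linarith
      have ht : 0 < 2 * S * h := by positivity
      have e1 : (1 - 2 * S * h) ^ 2 ≤ 1 := by nlinarith
      have e2 : 2 * lam * h * (1 - 2 * S * h) ≤ 2 * lam * h := by nlinarith [mul_pos hh hlam]
      have e3 : K ^ 2 * h ^ 2 ≤ K ^ 2 * h := by nlinarith [mul_nonneg (mul_nonneg (sq_nonneg K) hh.le) (by linarith : (0:ℝ) ≤ 1 - h)]
      linarith
    nlinarith
end

section
/- Under the dissipativity condition ⟨x, f(x)⟩ ≤ -α̃‖x‖² + β̃ and with a symmetric spring of coefficient S > 0, the coupled Euler one-step map preserves dissipativity of the sum: there exist γ ∈ (0, α̃), constants and h₀ > 0 such that for all 0 < h < h₀ and all x_f, x_c ∈ ℝ^m and Gaussian increment w, writing y_c = x_c + S(x_f - x_c)h + f(x_c)h + w and y_f = x_f + S(x_c - x_f)h + f(x_f)h + w, one has (deterministically) ‖y_c‖² + ‖y_f‖² ≤ (1 - 2γh)(‖x_c‖² + ‖x_f‖²) + 8‖w‖² + C h + 2⟨x_c + x_f, w⟩ + lower-order cross terms bounded by constants times h(1 + ‖x_c‖² + ‖x_f‖²);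 in particular taking expectations with E[w] = 0, E‖w‖² = mh: E[‖y_c‖² + ‖y_f‖²] ≤ (1 - 2γh) E[‖x_c‖² + ‖x_f‖²] + C'h for some C' > 0. -/
set_option maxHeartbeats 1000000

open MeasureTheory ProbabilityTheory Real

lemma sq_sum3_le (x y z : ℝ) : (x + y + z) ^ 2 ≤ 3 * (x ^ 2 + y ^ 2 + z ^ 2) := by
  nlinarith [sq_nonneg (x - y), sq_nonneg (x - z), sq_nonneg (y - z)]

lemma coupled_pt_bound (m : ℕ) (K alpha' beta' S h : ℝ)
    (hK : 0 < K) (halpha' : 0 < alpha') (hbeta' : 0 < beta') (hS : 0 < S)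
    (hh : 0 < h) (hh1 : h ≤ 1) (hL : h * (12 * S ^ 2 + 3 * K ^ 2) ≤ alpha')
    (f : EuclideanSpace ℝ (Fin m) → EuclideanSpace ℝ (Fin m))
    (hlip : ∀ x y, ‖f x - f y‖ ≤ K * ‖x - y‖)
    (hdiss : ∀ x, (inner ℝ x (f x) : ℝ) ≤ -alpha' * ‖x‖ ^ 2 + beta')
    (a b w : EuclideanSpace ℝ (Fin m)) :
    ‖a + (S * h) • (b - a) + h • f a + w‖ ^ 2
      + ‖b + (S * h) • (a - b) + h • f b + w‖ ^ 2
    ≤ (1 - alpha' * h) * (‖a‖ ^ 2 + ‖b‖ ^ 2) + (4 * beta' + 6 * ‖f 0‖ ^ 2) * h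
      + 2 * (inner ℝ ((a + (S * h) • (b - a) + h • f a)
              + (b + (S * h) • (a - b) + h • f b)) w : ℝ)
      + 2 * ‖w‖ ^ 2 := by
  set F := ‖f 0‖ with hFdef
  have hF : (0:ℝ) ≤ F := norm_nonneg _
  set vA : EuclideanSpace ℝ (Fin m) := S • (b - a) + f a with hvAdef
  set vB : EuclideanSpace ℝ (Fin m) := S • (a - b) + f b with hvBdef
  have ea : a + (S * h) • (b - a) + h • f a = a + h • vA := by
    rw [hvAdef]; module
  have eb : b + (S * h) • (a - b) + h • f b = b + h • vB := by
    rw [hvBdef]; module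
  rw [ea, eb]
  -- expansion identities
  have eA : ‖a + h • vA + w‖ ^ 2
      = ‖a‖ ^ 2 + 2 * h * (inner ℝ a vA : ℝ) + h ^ 2 * ‖vA‖ ^ 2
        + 2 * (inner ℝ (a + h • vA) w : ℝ) + ‖w‖ ^ 2 := by
    rw [norm_add_sq_real (a + h • vA) w, norm_add_sq_real a (h • vA),
      real_inner_smul_right, norm_smul, Real.norm_eq_abs, abs_of_pos hh, mul_pow]; ring
  have eB : ‖b + h • vB + w‖ ^ 2
      = ‖b‖ ^ 2 + 2 * h * (inner ℝ b vB : ℝ) + h ^ 2 * ‖vB‖ ^ 2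
        + 2 * (inner ℝ (b + h • vB) w : ℝ) + ‖w‖ ^ 2 := by
    rw [norm_add_sq_real (b + h • vB) w, norm_add_sq_real b (h • vB),
      real_inner_smul_right, norm_smul, Real.norm_eq_abs, abs_of_pos hh, mul_pow]; ring
  have einner : (inner ℝ ((a + h • vA) + (b + h • vB)) w : ℝ)
      = (inner ℝ (a + h • vA) w : ℝ) + (inner ℝ (b + h • vB) w : ℝ) :=
    inner_add_left _ _ _
  -- inner product computations
  have iA : (inner ℝ a vA : ℝ) = S * ((inner ℝ a b : ℝ) - ‖a‖ ^ 2) + (inner ℝ a (f a) : ℝ) := by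
    rw [hvAdef]
    rw [inner_add_right, real_inner_smul_right, inner_sub_right,
      real_inner_self_eq_norm_sq]
  have iB : (inner ℝ b vB : ℝ) = S * ((inner ℝ a b : ℝ) - ‖b‖ ^ 2) + (inner ℝ b (f b) : ℝ) := by
    rw [hvBdef]
    rw [inner_add_right, real_inner_smul_right, inner_sub_right,
      real_inner_self_eq_norm_sq, real_inner_comm b a]
  have CS : 2 * (inner ℝ a b : ℝ) ≤ ‖a‖ ^ 2 + ‖b‖ ^ 2 := by
    nlinarith [real_inner_le_norm a b, sq_nonneg (‖a‖ - ‖b‖)]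
  -- norm bounds on vA, vB
  have hfb : ∀ x : EuclideanSpace ℝ (Fin m), ‖f x‖ ≤ K * ‖x‖ + F := by
    intro x
    calc ‖f x‖ = ‖(f x - f 0) + f 0‖ := by rw [sub_add_cancel]
    _ ≤ ‖f x - f 0‖ + F := norm_add_le _ _
    _ ≤ K * ‖x - 0‖ + F := by linarith [hlip x 0]
    _ = K * ‖x‖ + F := by rw [sub_zero]
  have nA : ‖vA‖ ≤ S * (‖a‖ + ‖b‖) + (K * ‖a‖ + F) := by
    rw [hvAdef]
    calc ‖S • (b - a) + f a‖ ≤ ‖S • (b - a)‖ + ‖f a‖ := norm_add_le _ _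
    _ = S * ‖b - a‖ + ‖f a‖ := by rw [norm_smul, Real.norm_eq_abs, abs_of_pos hS]
    _ ≤ S * (‖a‖ + ‖b‖) + (K * ‖a‖ + F) := by
        have h1 : S * ‖b - a‖ ≤ S * (‖b‖ + ‖a‖) :=
          mul_le_mul_of_nonneg_left (norm_sub_le b a) hS.le
        have h2 := hfb a
        linarith
  have nB : ‖vB‖ ≤ S * (‖a‖ + ‖b‖) + (K * ‖b‖ + F) := by
    rw [hvBdef]
    calc ‖S • (a - b) + f b‖ ≤ ‖S • (a - b)‖ + ‖f b‖ := norm_add_le _ _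
    _ = S * ‖a - b‖ + ‖f b‖ := by rw [norm_smul, Real.norm_eq_abs, abs_of_pos hS]
    _ ≤ S * (‖a‖ + ‖b‖) + (K * ‖b‖ + F) := by
        have h1 : S * ‖a - b‖ ≤ S * (‖a‖ + ‖b‖) :=
          mul_le_mul_of_nonneg_left (norm_sub_le a b) hS.le
        have h2 := hfb b
        linarith
  have hvA2 : ‖vA‖ ^ 2 ≤ 3 * (S ^ 2 * (‖a‖ + ‖b‖) ^ 2 + K ^ 2 * ‖a‖ ^ 2 + F ^ 2) := by
    have hpos : (0:ℝ) ≤ S * (‖a‖ + ‖b‖) + (K * ‖a‖ + F) := by positivity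
    have e : ‖vA‖ ^ 2 ≤ (S * (‖a‖ + ‖b‖) + (K * ‖a‖ + F)) ^ 2 := by
      rw [sq, sq]; exact mul_le_mul nA nA (norm_nonneg vA) hpos
    have e2 := sq_sum3_le (S * (‖a‖ + ‖b‖)) (K * ‖a‖) F
    calc ‖vA‖ ^ 2 ≤ (S * (‖a‖ + ‖b‖) + (K * ‖a‖ + F)) ^ 2 := e
    _ = (S * (‖a‖ + ‖b‖) + K * ‖a‖ + F) ^ 2 := by ring
    _ ≤ 3 * ((S * (‖a‖ + ‖b‖)) ^ 2 + (K * ‖a‖) ^ 2 + F ^ 2) := e2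
    _ = 3 * (S ^ 2 * (‖a‖ + ‖b‖) ^ 2 + K ^ 2 * ‖a‖ ^ 2 + F ^ 2) := by ring
  have hvB2 : ‖vB‖ ^ 2 ≤ 3 * (S ^ 2 * (‖a‖ + ‖b‖) ^ 2 + K ^ 2 * ‖b‖ ^ 2 + F ^ 2) := by
    have hpos : (0:ℝ) ≤ S * (‖a‖ + ‖b‖) + (K * ‖b‖ + F) := by positivity
    have e : ‖vB‖ ^ 2 ≤ (S * (‖a‖ + ‖b‖) + (K * ‖b‖ + F)) ^ 2 := by
      rw [sq, sq]; exact mul_le_mul nB nB (norm_nonneg vB) hpos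
    have e2 := sq_sum3_le (S * (‖a‖ + ‖b‖)) (K * ‖b‖) F
    calc ‖vB‖ ^ 2 ≤ (S * (‖a‖ + ‖b‖) + (K * ‖b‖ + F)) ^ 2 := e
    _ = (S * (‖a‖ + ‖b‖) + K * ‖b‖ + F) ^ 2 := by ring
    _ ≤ 3 * ((S * (‖a‖ + ‖b‖)) ^ 2 + (K * ‖b‖) ^ 2 + F ^ 2) := e2
    _ = 3 * (S ^ 2 * (‖a‖ + ‖b‖) ^ 2 + K ^ 2 * ‖b‖ ^ 2 + F ^ 2) := by ring
  have hQ2 : (‖a‖ + ‖b‖) ^ 2 ≤ 2 * (‖a‖ ^ 2 + ‖b‖ ^ 2) := by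
    nlinarith [sq_nonneg (‖a‖ - ‖b‖)]
  have hsumv : ‖vA‖ ^ 2 + ‖vB‖ ^ 2
      ≤ (12 * S ^ 2 + 3 * K ^ 2) * (‖a‖ ^ 2 + ‖b‖ ^ 2) + 6 * F ^ 2 := by
    linarith [hvA2, hvB2, mul_le_mul_of_nonneg_left hQ2 (sq_nonneg S),
      sq_nonneg (K * ‖a‖), sq_nonneg (K * ‖b‖)]
  rw [eA, eB, einner, iA, iB]
  have hda := hdiss a
  have hdb := hdiss b
  have hq : (0:ℝ) ≤ ‖a‖ ^ 2 + ‖b‖ ^ 2 := by positivity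
  have h1 : h * (inner ℝ a (f a) : ℝ) ≤ h * (-alpha' * ‖a‖ ^ 2 + beta') :=
    mul_le_mul_of_nonneg_left hda hh.le
  have h2 : h * (inner ℝ b (f b) : ℝ) ≤ h * (-alpha' * ‖b‖ ^ 2 + beta') :=
    mul_le_mul_of_nonneg_left hdb hh.le
  have h3 : 0 ≤ h * S * (‖a‖ ^ 2 + ‖b‖ ^ 2 - 2 * (inner ℝ a b : ℝ)) :=
    mul_nonneg (mul_nonneg hh.le hS.le) (by linarith)
  have h4 : h ^ 2 * (‖vA‖ ^ 2 + ‖vB‖ ^ 2)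
      ≤ h ^ 2 * ((12 * S ^ 2 + 3 * K ^ 2) * (‖a‖ ^ 2 + ‖b‖ ^ 2) + 6 * F ^ 2) :=
    mul_le_mul_of_nonneg_left hsumv (sq_nonneg h)
  have h5 : h * (12 * S ^ 2 + 3 * K ^ 2) * h * (‖a‖ ^ 2 + ‖b‖ ^ 2)
      ≤ alpha' * h * (‖a‖ ^ 2 + ‖b‖ ^ 2) :=
    mul_le_mul_of_nonneg_right (mul_le_mul_of_nonneg_right hL hh.le) hq
  have h6 : h * h * F ^ 2 ≤ h * 1 * F ^ 2 :=
    mul_le_mul_of_nonneg_right (mul_le_mul_of_nonneg_left hh1 hh.le) (sq_nonneg F)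
  linarith [h1, h2, h3, h4, h5, h6]


lemma euclidean_apply_le_norm {m : ℕ} (x : EuclideanSpace ℝ (Fin m)) (i : Fin m) :
    |x i| ≤ ‖x‖ := by
  have h1 : |x i| ^ 2 ≤ ‖x‖ ^ 2 := by
    rw [EuclideanSpace.norm_eq, Real.sq_sqrt (by positivity)]
    have := Finset.single_le_sum (f := fun j => ‖x j‖ ^ 2)
      (fun j _ => by positivity) (Finset.mem_univ i)
    simpa [Real.norm_eq_abs, sq_abs] using this
  nlinarith [abs_nonneg (x i), norm_nonneg x]

theorem coupled_euler_step_dissipativity (m : ℕ) (K alpha' beta' S : ℝ)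
    (hK : 0 < K) (halpha' : 0 < alpha') (hbeta' : 0 < beta') (hS : 0 < S)
    (f : EuclideanSpace ℝ (Fin m) → EuclideanSpace ℝ (Fin m))
    (hlip : ∀ x y, ‖f x - f y‖ ≤ K * ‖x - y‖)
    (hdiss : ∀ x, (inner ℝ x (f x) : ℝ) ≤ -alpha' * ‖x‖ ^ 2 + beta') :
    ∃ gam : ℝ, 0 < gam ∧ gam < alpha' ∧ ∃ C' > 0, ∃ h₀ > 0,
      ∀ h : ℝ, 0 < h → h < h₀ → S * h < 1 / 2 →
      ∀ (Ω : Type) [MeasurableSpace Ω] (μ : Measure Ω),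
        IsProbabilityMeasure μ →
      ∀ (xf xc w : Ω → EuclideanSpace ℝ (Fin m)),
        Measurable xf → Measurable xc → Measurable w →
        IndepFun w (fun ω => (xf ω, xc ω)) μ →
        (∫ ω, w ω ∂μ) = 0 →
        (∫ ω, ‖w ω‖ ^ 2 ∂μ) = m * h →
        Integrable (fun ω => ‖xf ω‖ ^ 2) μ →
        Integrable (fun ω => ‖xc ω‖ ^ 2) μ →
        Integrable (fun ω => ‖w ω‖ ^ 2) μ →
        (∫ ω, (‖xc ω + (S * h) • (xf ω - xc ω) + h • f (xc ω) + w ω‖ ^ 2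
              + ‖xf ω + (S * h) • (xc ω - xf ω) + h • f (xf ω) + w ω‖ ^ 2) ∂μ)
          ≤ (1 - 2 * gam * h) * (∫ ω, (‖xc ω‖ ^ 2 + ‖xf ω‖ ^ 2) ∂μ)
            + C' * h := by
  have hcf : Continuous f := by
    have hl : LipschitzWith (Real.toNNReal K) f := by
      apply LipschitzWith.of_dist_le_mul
      intro x y
      rw [dist_eq_norm, dist_eq_norm, Real.coe_toNNReal K hK.le]
      exact hlip x y
    exact hl.continuous
  have hmf : Measurable f := hcf.measurable
  have hLpos : (0:ℝ) < 12 * S ^ 2 + 3 * K ^ 2 := by positivity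
  have hF : (0:ℝ) ≤ ‖f 0‖ := norm_nonneg _
  refine ⟨alpha' / 2, by positivity, by linarith,
    4 * beta' + 6 * ‖f 0‖ ^ 2 + 2 * m, by positivity,
    min (alpha' / (12 * S ^ 2 + 3 * K ^ 2)) 1, by positivity, ?_⟩
  intro h hh hh0 hSh Ω _ μ hμ xf xc w hmxf hmxc hmw hindep hEw hEw2 hIxf hIxc hIw2
  have hh1 : h ≤ 1 := le_of_lt (lt_of_lt_of_le hh0 (min_le_right _ _))
  have hhL : h * (12 * S ^ 2 + 3 * K ^ 2) ≤ alpha' := by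
    have h2 : h < alpha' / (12 * S ^ 2 + 3 * K ^ 2) :=
      lt_of_lt_of_le hh0 (min_le_left _ _)
    exact le_of_lt ((lt_div_iff₀ hLpos).mp h2)
  have hfb : ∀ x : EuclideanSpace ℝ (Fin m), ‖f x‖ ≤ K * ‖x‖ + ‖f 0‖ := by
    intro x
    calc ‖f x‖ = ‖(f x - f 0) + f 0‖ := by rw [sub_add_cancel]
    _ ≤ ‖f x - f 0‖ + ‖f 0‖ := norm_add_le _ _
    _ ≤ K * ‖x - 0‖ + ‖f 0‖ := by linarith [hlip x 0]
    _ = K * ‖x‖ + ‖f 0‖ := by rw [sub_zero]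
  -- vector-valued integrability
  have hvec : ∀ (u : Ω → EuclideanSpace ℝ (Fin m)), Measurable u →
      Integrable (fun ω => ‖u ω‖ ^ 2) μ → Integrable u μ := by
    intro u hmu hIu
    have hd : Integrable (fun ω => (1:ℝ) + ‖u ω‖ ^ 2) μ := (integrable_const (1:ℝ)).add hIu
    apply Integrable.mono' hd hmu.aestronglyMeasurable
    filter_upwards with ω
    nlinarith [sq_nonneg (‖u ω‖ - 1), norm_nonneg (u ω)]
  have hIwv : Integrable w μ := hvec w hmw hIw2
  -- the deterministic drift part
  set X : Ω → EuclideanSpace ℝ (Fin m) := fun ω =>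
    (xc ω + (S * h) • (xf ω - xc ω) + h • f (xc ω))
      + (xf ω + (S * h) • (xc ω - xf ω) + h • f (xf ω)) with hXdef
  have hmX : Measurable X := by
    apply Measurable.add
    · exact (hmxc.add ((hmxf.sub hmxc).const_smul (S * h))).add
        ((hmf.comp hmxc).const_smul h)
    · exact (hmxf.add ((hmxc.sub hmxf).const_smul (S * h))).add
        ((hmf.comp hmxf).const_smul h)
  have hpiece : ∀ (aa bb : EuclideanSpace ℝ (Fin m)),
      ‖aa + (S * h) • (bb - aa) + h • f aa‖
        ≤ ‖aa‖ + S * h * (‖bb‖ + ‖aa‖) + h * (K * ‖aa‖ + ‖f 0‖) := by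
    intro aa bb
    have e1 : ‖(S * h) • (bb - aa)‖ = S * h * ‖bb - aa‖ := by
      rw [norm_smul, Real.norm_eq_abs, abs_of_pos (mul_pos hS hh)]
    have e2 : ‖h • f aa‖ = h * ‖f aa‖ := by
      rw [norm_smul, Real.norm_eq_abs, abs_of_pos hh]
    have e3 : S * h * ‖bb - aa‖ ≤ S * h * (‖bb‖ + ‖aa‖) :=
      mul_le_mul_of_nonneg_left (norm_sub_le bb aa) (mul_pos hS hh).le
    have e4 : h * ‖f aa‖ ≤ h * (K * ‖aa‖ + ‖f 0‖) :=
      mul_le_mul_of_nonneg_left (hfb aa) hh.le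
    calc ‖aa + (S * h) • (bb - aa) + h • f aa‖
        ≤ ‖aa + (S * h) • (bb - aa)‖ + ‖h • f aa‖ := norm_add_le _ _
    _ ≤ ‖aa‖ + ‖(S * h) • (bb - aa)‖ + ‖h • f aa‖ := by
        linarith [norm_add_le aa ((S * h) • (bb - aa))]
    _ ≤ ‖aa‖ + S * h * (‖bb‖ + ‖aa‖) + h * (K * ‖aa‖ + ‖f 0‖) := by
        rw [e1, e2]; linarith
  have hXle : ∀ ω, ‖X ω‖ ≤ (2 + 4 * S + 2 * K + 2 * ‖f 0‖)
      * (1 + ‖xc ω‖ ^ 2 + ‖xf ω‖ ^ 2) := by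
    intro ω
    have p1 := hpiece (xc ω) (xf ω)
    have p2 := hpiece (xf ω) (xc ω)
    have hn := norm_add_le (xc ω + (S * h) • (xf ω - xc ω) + h • f (xc ω))
      (xf ω + (S * h) • (xc ω - xf ω) + h • f (xf ω))
    set na := ‖xc ω‖
    set nb := ‖xf ω‖
    have hna : (0:ℝ) ≤ na := norm_nonneg _
    have hnb : (0:ℝ) ≤ nb := norm_nonneg _
    have sna : na ≤ 1 + na ^ 2 := by nlinarith [sq_nonneg (na - 1)]
    have snb : nb ≤ 1 + nb ^ 2 := by nlinarith [sq_nonneg (nb - 1)]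
    have q1 : S * h * (nb + na) ≤ S * (nb + na) := by
      have : S * h ≤ S * 1 := mul_le_mul_of_nonneg_left hh1 hS.le
      nlinarith
    have q2 : h * (K * na + ‖f 0‖) ≤ K * na + ‖f 0‖ := by
      have hb : (0:ℝ) ≤ K * na + ‖f 0‖ := by positivity
      nlinarith
    have q3 : h * (K * nb + ‖f 0‖) ≤ K * nb + ‖f 0‖ := by
      have hb : (0:ℝ) ≤ K * nb + ‖f 0‖ := by positivity
      nlinarith
    have r1 : S * na ≤ S * (1 + na ^ 2) := mul_le_mul_of_nonneg_left sna hS.le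
    have r2 : S * nb ≤ S * (1 + nb ^ 2) := mul_le_mul_of_nonneg_left snb hS.le
    have r3 : K * na ≤ K * (1 + na ^ 2) := mul_le_mul_of_nonneg_left sna hK.le
    have r4 : K * nb ≤ K * (1 + nb ^ 2) := mul_le_mul_of_nonneg_left snb hK.le
    have r5 : (0:ℝ) ≤ ‖f 0‖ * (na ^ 2 + nb ^ 2) := by positivity
    have r6 : (0:ℝ) ≤ S * (na ^ 2 + nb ^ 2) := by positivity
    have r7 : (0:ℝ) ≤ K * (na ^ 2 + nb ^ 2) := by positivity
    have r8 : (0:ℝ) ≤ na ^ 2 + nb ^ 2 := by positivity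
    calc ‖X ω‖ ≤ _ := hn
    _ ≤ (2 + 4 * S + 2 * K + 2 * ‖f 0‖) * (1 + na ^ 2 + nb ^ 2) := by
        linarith
  have hIXg : Integrable (fun ω => (2 + 4 * S + 2 * K + 2 * ‖f 0‖)
      * (1 + ‖xc ω‖ ^ 2 + ‖xf ω‖ ^ 2)) μ :=
    (((integrable_const (1:ℝ)).add hIxc).add hIxf).const_mul _
  have hIX : Integrable X μ :=
    Integrable.mono' hIXg hmX.aestronglyMeasurable
      (Filter.Eventually.of_forall fun ω => hXle ω)
  -- componentwise facts
  have hmXi : ∀ i, Measurable (fun ω => X ω i) := fun i =>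
    (measurable_pi_apply i).comp ((WithLp.measurable_ofLp 2 _).comp hmX)
  have hmwi : ∀ i, Measurable (fun ω => w ω i) := fun i =>
    (measurable_pi_apply i).comp ((WithLp.measurable_ofLp 2 _).comp hmw)
  have hIXi : ∀ i, Integrable (fun ω => X ω i) μ := by
    intro i
    apply Integrable.mono' hIX.norm (hmXi i).aestronglyMeasurable
    filter_upwards with ω
    rw [Real.norm_eq_abs]
    exact euclidean_apply_le_norm (X ω) i
  have hIwi : ∀ i, Integrable (fun ω => w ω i) μ := by
    intro i
    apply Integrable.mono' hIwv.norm (hmwi i).aestronglyMeasurable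
    filter_upwards with ω
    rw [Real.norm_eq_abs]
    exact euclidean_apply_le_norm (w ω) i
  have hindep_i : ∀ i : Fin m, IndepFun (fun ω => X ω i) (fun ω => w ω i) μ := by
    intro i
    have hψ : Measurable (fun p : EuclideanSpace ℝ (Fin m) × EuclideanSpace ℝ (Fin m) =>
        ((p.2 + (S * h) • (p.1 - p.2) + h • f p.2)
          + (p.1 + (S * h) • (p.2 - p.1) + h • f p.1)) i) := by
      apply (measurable_pi_apply i).comp
      refine (WithLp.measurable_ofLp 2 _).comp ?_
      apply Measurable.add
      · exact (measurable_snd.add ((measurable_fst.sub measurable_snd).const_smul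
          (S * h))).add ((hmf.comp measurable_snd).const_smul h)
      · exact (measurable_fst.add ((measurable_snd.sub measurable_fst).const_smul
          (S * h))).add ((hmf.comp measurable_fst).const_smul h)
    have := hindep.comp ((measurable_pi_apply i).comp (WithLp.measurable_ofLp 2 _)) hψ
    exact this.symm
  have hprod : ∀ i : Fin m, Integrable (fun ω => X ω i * w ω i) μ := fun i =>
    (hindep_i i).integrable_mul (hIXi i) (hIwi i)
  have hEwi : ∀ i : Fin m, (∫ ω, w ω i ∂μ) = 0 := by
    intro i
    have hcc := (EuclideanSpace.proj (𝕜 := ℝ) i).integral_comp_comm hIwv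
    simpa [hEw] using hcc
  have hEXwi : ∀ i : Fin m, (∫ ω, X ω i * w ω i ∂μ) = 0 := by
    intro i
    have hm := (hindep_i i).integral_mul_eq_mul_integral (hIXi i).aestronglyMeasurable (hIwi i).aestronglyMeasurable
    have he : (∫ ω, X ω i * w ω i ∂μ)
        = (∫ ω, X ω i ∂μ) * ∫ ω, w ω i ∂μ := hm
    rw [he, hEwi i, mul_zero]
  have hinnerfun : (fun ω => (inner ℝ (X ω) (w ω) : ℝ))
      = fun ω => ∑ i, X ω i * w ω i := by
    funext ω
    simp [PiLp.inner_apply, RCLike.inner_apply, conj_trivial, mul_comm]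
  have hIinner : Integrable (fun ω => (inner ℝ (X ω) (w ω) : ℝ)) μ := by
    rw [hinnerfun]
    exact integrable_finset_sum _ fun i _ => hprod i
  have hEinner : (∫ ω, (inner ℝ (X ω) (w ω) : ℝ) ∂μ) = 0 := by
    rw [hinnerfun, integral_finset_sum _ fun i _ => hprod i]
    simp [hEXwi]
  -- the dominating function
  set g : Ω → ℝ := fun ω =>
    (1 - alpha' * h) * (‖xc ω‖ ^ 2 + ‖xf ω‖ ^ 2)
      + (4 * beta' + 6 * ‖f 0‖ ^ 2) * h
      + 2 * (inner ℝ (X ω) (w ω) : ℝ) + 2 * ‖w ω‖ ^ 2 with hgdef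
  have hIq : Integrable (fun ω => ‖xc ω‖ ^ 2 + ‖xf ω‖ ^ 2) μ := hIxc.add hIxf
  have hIg : Integrable g μ := by
    apply Integrable.add
    apply Integrable.add
    apply Integrable.add
    · exact hIq.const_mul _
    · exact integrable_const _
    · exact hIinner.const_mul 2
    · exact hIw2.const_mul 2
  have hmono : (∫ ω, (‖xc ω + (S * h) • (xf ω - xc ω) + h • f (xc ω) + w ω‖ ^ 2
        + ‖xf ω + (S * h) • (xc ω - xf ω) + h • f (xf ω) + w ω‖ ^ 2) ∂μ)
      ≤ ∫ ω, g ω ∂μ := by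
    apply integral_mono_of_nonneg
    · filter_upwards with ω; positivity
    · exact hIg
    · filter_upwards with ω
      exact coupled_pt_bound m K alpha' beta' S h hK halpha' hbeta' hS hh hh1 hhL
        f hlip hdiss (xc ω) (xf ω) (w ω)
  have I1 : Integrable (fun ω => (1 - alpha' * h) * (‖xc ω‖ ^ 2 + ‖xf ω‖ ^ 2)) μ :=
    hIq.const_mul _
  have I2 : Integrable (fun _ : Ω => (4 * beta' + 6 * ‖f 0‖ ^ 2) * h) μ :=
    integrable_const _
  have I3 : Integrable (fun ω => 2 * (inner ℝ (X ω) (w ω) : ℝ)) μ := hIinner.const_mul 2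
  have I4 : Integrable (fun ω => 2 * ‖w ω‖ ^ 2) μ := hIw2.const_mul 2
  have I12 : Integrable (fun ω => (1 - alpha' * h) * (‖xc ω‖ ^ 2 + ‖xf ω‖ ^ 2)
      + (4 * beta' + 6 * ‖f 0‖ ^ 2) * h) μ := I1.add I2
  have I123 : Integrable (fun ω => (1 - alpha' * h) * (‖xc ω‖ ^ 2 + ‖xf ω‖ ^ 2)
      + (4 * beta' + 6 * ‖f 0‖ ^ 2) * h + 2 * (inner ℝ (X ω) (w ω) : ℝ)) μ := I12.add I3
  have hgval : (∫ ω, g ω ∂μ)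
      = (1 - alpha' * h) * (∫ ω, (‖xc ω‖ ^ 2 + ‖xf ω‖ ^ 2) ∂μ)
        + (4 * beta' + 6 * ‖f 0‖ ^ 2) * h + 2 * (m * h) := by
    have e0 : (∫ ω, g ω ∂μ)
        = (∫ ω, ((1 - alpha' * h) * (‖xc ω‖ ^ 2 + ‖xf ω‖ ^ 2)
            + (4 * beta' + 6 * ‖f 0‖ ^ 2) * h + 2 * (inner ℝ (X ω) (w ω) : ℝ)) ∂μ)
          + ∫ ω, 2 * ‖w ω‖ ^ 2 ∂μ := integral_add I123 I4
    have e1 : (∫ ω, ((1 - alpha' * h) * (‖xc ω‖ ^ 2 + ‖xf ω‖ ^ 2)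
            + (4 * beta' + 6 * ‖f 0‖ ^ 2) * h + 2 * (inner ℝ (X ω) (w ω) : ℝ)) ∂μ)
        = (∫ ω, ((1 - alpha' * h) * (‖xc ω‖ ^ 2 + ‖xf ω‖ ^ 2)
            + (4 * beta' + 6 * ‖f 0‖ ^ 2) * h) ∂μ)
          + ∫ ω, 2 * (inner ℝ (X ω) (w ω) : ℝ) ∂μ := integral_add I12 I3
    have e2 : (∫ ω, ((1 - alpha' * h) * (‖xc ω‖ ^ 2 + ‖xf ω‖ ^ 2)
            + (4 * beta' + 6 * ‖f 0‖ ^ 2) * h) ∂μ)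
        = (∫ ω, (1 - alpha' * h) * (‖xc ω‖ ^ 2 + ‖xf ω‖ ^ 2) ∂μ)
          + ∫ _ω, (4 * beta' + 6 * ‖f 0‖ ^ 2) * h ∂μ := integral_add I1 I2
    have e3 : (∫ ω, (1 - alpha' * h) * (‖xc ω‖ ^ 2 + ‖xf ω‖ ^ 2) ∂μ)
        = (1 - alpha' * h) * ∫ ω, (‖xc ω‖ ^ 2 + ‖xf ω‖ ^ 2) ∂μ :=
      integral_const_mul _ _
    have e4 : (∫ _ω : Ω, (4 * beta' + 6 * ‖f 0‖ ^ 2) * h ∂μ)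
        = (4 * beta' + 6 * ‖f 0‖ ^ 2) * h := by
      simp [measure_univ]
    have e5 : (∫ ω, 2 * (inner ℝ (X ω) (w ω) : ℝ) ∂μ) = 0 := by
      rw [integral_const_mul, hEinner, mul_zero]
    have e6 : (∫ ω, 2 * ‖w ω‖ ^ 2 ∂μ) = 2 * (m * h) := by
      rw [integral_const_mul, hEw2]
    rw [e0, e1, e2, e3, e4, e5, e6]
    ring
  have hfinal := hmono.trans_eq hgval
  have : (1 - alpha' * h) * (∫ ω, (‖xc ω‖ ^ 2 + ‖xf ω‖ ^ 2) ∂μ)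
        + (4 * beta' + 6 * ‖f 0‖ ^ 2) * h + 2 * (m * h)
      = (1 - 2 * (alpha' / 2) * h) * (∫ ω, (‖xc ω‖ ^ 2 + ‖xf ω‖ ^ 2) ∂μ)
        + (4 * beta' + 6 * ‖f 0‖ ^ 2 + 2 * m) * h := by ring
  linarith [hfinal, this.le, this.ge]
end
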